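/- arXiv:2605.06123 — 2 statements merged into one kernel-verified Lean document; each statement's English description precedes it below -/
import Mathlib

section
/- Let P be a probability distribution on an instance space X, let the per-instance loss satisfy 0 ≤ ℓ(θ; x) ≤ 1 for every θ ∈ Θ and P-almost every x, let D = (x_1, …, x_n) be an i.i.d. sample from P^n, and let A = A(D) be any (possibly randomized) data-dependent random variable taking values in Θ. Then the expected generalization gap satisfies |E[L_P(A) − L̂_D(A)]| ≤ sqrt( I(A; D) / (2n) ), where I(A; D) is the mutual information between A and the dataset D. -/
open MeasureTheory ProbabilityTheory
open scoped ENNReal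

open Classical in
/-- The Kullback–Leibler divergence between two measures, valued in `ℝ≥0∞`:
it is `∫ log (dμ/dν) dμ` when `μ ≪ ν` and the log-likelihood ratio is integrable,
and `∞` otherwise. -/
noncomputable def klDiv {α : Type*} [MeasurableSpace α] (μ ν : Measure α) : ℝ≥0∞ :=
  if μ ≪ ν ∧ Integrable (llr μ ν) μ then ENNReal.ofReal (∫ x, llr μ ν x ∂μ) else ⊤

/-- The mutual information `I(U; V)` between two random variables: the KL divergence
between their joint law and the product of their marginal laws. -/
noncomputable def mutualInfo {Ω α β : Type*} [MeasurableSpace Ω] [MeasurableSpace α]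
    [MeasurableSpace β] (μ : Measure Ω) (U : Ω → α) (V : Ω → β) : ℝ≥0∞ :=
  klDiv (μ.map fun ω => (U ω, V ω)) ((μ.map U).prod (μ.map V))

section AuxiliaryLemmas
open Real MeasureTheory
/-- Key analytic inequality behind Hoeffding's lemma. -/
lemma hoeff_key {p : ℝ} (hp0 : 0 ≤ p) (hp1 : p ≤ 1) (h : ℝ) :
    1 - p + p * exp h ≤ exp (p * h + h ^ 2 / 8) := by
  -- positivity of the denominator
  have hc : ∀ x : ℝ, 0 < 1 - p + p * exp x := by
    intro x
    rcases eq_or_lt_of_le hp0 with h0 | h0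
    · simp [← h0]
    · nlinarith [exp_pos x, mul_pos h0 (exp_pos x)]
  set c : ℝ → ℝ := fun x => 1 - p + p * exp x with hc_def
  set F : ℝ → ℝ := fun x => p * x + x ^ 2 / 8 - log (c x) with hF_def
  set G : ℝ → ℝ := fun x => p + x / 4 - p * exp x / c x with hG_def
  have hcF : ∀ x, HasDerivAt F (G x) x := by
    intro x
    have h1 : HasDerivAt c (p * exp x) x := by
      exact ((hasDerivAt_exp x).const_mul p).const_add (1 - p)
    have h2 : HasDerivAt (fun y => log (c y)) (p * exp x / c x) x :=
      h1.log (hc x).ne'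
    have h3 : HasDerivAt (fun y : ℝ => p * y + y ^ 2 / 8) (p + 2 * x / 8) x := by
      exact (((hasDerivAt_id x).const_mul p).add
        (((hasDerivAt_pow 2 x)).div_const 8)).congr_deriv (by simp)
    have := h3.sub h2
    refine this.congr_deriv ?_
    show _ = p + x / 4 - p * exp x / c x
    ring
  have hcG : ∀ x, HasDerivAt G (1 / 4 - p * exp x * (1 - p) / (c x) ^ 2) x := by
    intro x
    have h1 : HasDerivAt c (p * exp x) x := by
      exact ((hasDerivAt_exp x).const_mul p).const_add (1 - p)
    have h2 : HasDerivAt (fun y => p * exp y) (p * exp x) x :=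
      (hasDerivAt_exp x).const_mul p
    have h3 : HasDerivAt (fun y => p * exp y / c y)
        ((p * exp x * c x - p * exp x * (p * exp x)) / (c x) ^ 2) x :=
      h2.div h1 (hc x).ne'
    have h4 : HasDerivAt (fun y : ℝ => p + y / 4) (1 / 4) x := by
      simpa using ((hasDerivAt_id x).div_const 4).const_add p
    have := h4.sub h3
    refine this.congr_deriv ?_
    have : p * exp x * c x - p * exp x * (p * exp x) = p * exp x * (1 - p) := by
      simp only [hc_def]; ring
    rw [this]
  have hG0 : G 0 = 0 := by
    simp only [hG_def, hc_def]
    simp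
  have hGmono : Monotone G := by
    refine monotone_of_deriv_nonneg (fun x => (hcG x).differentiableAt) fun x => ?_
    rw [(hcG x).deriv]
    have hcx := hc x
    have h2 : p * exp x * (1 - p) / (c x) ^ 2 ≤ 1 / 4 := by
      rw [div_le_iff₀ (by positivity)]
      show p * exp x * (1 - p) ≤ 1 / 4 * (1 - p + p * exp x) ^ 2
      nlinarith [sq_nonneg (p * exp x - (1 - p))]
    linarith
  have hF0 : F 0 = 0 := by simp [hF_def, hc_def]
  have hFdiff : Differentiable ℝ F := fun x => (hcF x).differentiableAt
  have hFnonneg : ∀ x, 0 ≤ F x := by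
    intro x
    rcases le_or_gt 0 x with hx | hx
    · have hmono : MonotoneOn F (Set.Ici 0) :=
        monotoneOn_of_deriv_nonneg (convex_Ici 0) hFdiff.continuous.continuousOn
          (fun y _ => (hFdiff y).differentiableWithinAt)
          (fun y hy => by
            rw [(hcF y).deriv]
            rw [interior_Ici, Set.mem_Ioi] at hy
            exact hG0 ▸ hGmono hy.le)
      have := hmono Set.self_mem_Ici hx hx
      rwa [hF0] at this
    · have hanti : AntitoneOn F (Set.Iic 0) :=
        antitoneOn_of_deriv_nonpos (convex_Iic 0) hFdiff.continuous.continuousOn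
          (fun y _ => (hFdiff y).differentiableWithinAt)
          (fun y hy => by
            rw [(hcF y).deriv]
            rw [interior_Iic, Set.mem_Iio] at hy
            exact hG0 ▸ hGmono hy.le)
      have := hanti hx.le Set.self_mem_Iic hx.le
      rwa [hF0] at this
  have := hFnonneg h
  have hlog : log (c h) ≤ p * h + h ^ 2 / 8 := by
    simp only [hF_def] at this; linarith
  calc c h ≤ exp (log (c h)) := le_of_eq (exp_log (hc h)).symm
  _ ≤ _ := exp_le_exp.2 hlog

/-- **Hoeffding's lemma**: for a centered random variable with values in `[a, b]` a.s.,
the moment generating function is at most `exp (t² (b-a)² / 8)`. -/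
lemma hoeffding_lemma {Ω : Type*} [MeasurableSpace Ω] (μ : Measure Ω) [IsProbabilityMeasure μ]
    {Y : Ω → ℝ} (hYm : AEStronglyMeasurable Y μ) {a b : ℝ}
    (hY : ∀ᵐ ω ∂μ, Y ω ∈ Set.Icc a b) (hmean : ∫ ω, Y ω ∂μ = 0) (t : ℝ) :
    ∫ ω, exp (t * Y ω) ∂μ ≤ exp (t ^ 2 * (b - a) ^ 2 / 8) := by
  have hYint : Integrable Y μ := by
    refine Integrable.mono' (integrable_const (max |a| |b|)) hYm ?_
    filter_upwards [hY] with ω hω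
    rw [Real.norm_eq_abs, abs_le]
    constructor
    · calc -(max |a| |b|) ≤ -|a| := by simp
      _ ≤ a := neg_abs_le a
      _ ≤ Y ω := hω.1
    · calc Y ω ≤ b := hω.2
      _ ≤ |b| := le_abs_self b
      _ ≤ max |a| |b| := le_max_right _ _
  have hab : a ≤ b := by
    have h1 : a ≤ 0 := by
      have := integral_mono_ae (integrable_const a) hYint (hY.mono fun ω hω => hω.1)
      simpa [hmean] using this
    have h2 : 0 ≤ b := by
      have := integral_mono_ae hYint (integrable_const b) (hY.mono fun ω hω => hω.2)
      simpa [hmean] using this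
    linarith
  rcases eq_or_lt_of_le hab with heq | hlt
  · -- degenerate case a = b : then Y = 0 a.e.
    have ha0 : a = 0 := by
      have h1 : a ≤ 0 := by
        have := integral_mono_ae (integrable_const a) hYint (hY.mono fun ω hω => hω.1)
        simpa [hmean] using this
      have h2 : 0 ≤ a := by
        have := integral_mono_ae hYint (integrable_const b) (hY.mono fun ω hω => hω.2)
        simpa [hmean, ← heq] using this
      linarith
    have hY0 : ∀ᵐ ω ∂μ, Y ω = 0 := by
      filter_upwards [hY] with ω hω
      rw [ha0] at hω; rw [← heq, ha0] at hω
      exact le_antisymm hω.2 hω.1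
    have : ∫ ω, exp (t * Y ω) ∂μ = 1 := by
      rw [integral_congr_ae (g := fun _ => (1 : ℝ)) (hY0.mono fun ω hω => by simp [hω])]
      simp
    rw [this]
    exact Real.one_le_exp (by positivity)
  · -- main case a < b
    have hba : 0 < b - a := by linarith
    have ha0 : a ≤ 0 := by
      have := integral_mono_ae (integrable_const a) hYint (hY.mono fun ω hω => hω.1)
      simpa [hmean] using this
    have hb0 : 0 ≤ b := by
      have := integral_mono_ae hYint (integrable_const b) (hY.mono fun ω hω => hω.2)
      simpa [hmean] using this
    -- pointwise convexity bound
    have hpt : ∀ᵐ ω ∂μ, exp (t * Y ω) ≤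
        ((b - Y ω) * exp (t * a) + (Y ω - a) * exp (t * b)) / (b - a) := by
      filter_upwards [hY] with ω hω
      have h1 : (b - Y ω) / (b - a) + (Y ω - a) / (b - a) = 1 := by
        field_simp
        ring
      have h2 : 0 ≤ (b - Y ω) / (b - a) := by
        apply div_nonneg _ hba.le; linarith [hω.2]
      have h3 : 0 ≤ (Y ω - a) / (b - a) := by
        apply div_nonneg _ hba.le; linarith [hω.1]
      have h4 := convexOn_exp.2 (Set.mem_univ (t * a)) (Set.mem_univ (t * b)) h2 h3 h1
      have h5 : (b - Y ω) / (b - a) * (t * a) + (Y ω - a) / (b - a) * (t * b) = t * Y ω := by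
        field_simp
        ring
      simp only [smul_eq_mul] at h4
      rw [h5] at h4
      calc exp (t * Y ω)
          ≤ (b - Y ω) / (b - a) * exp (t * a) + (Y ω - a) / (b - a) * exp (t * b) := h4
        _ = ((b - Y ω) * exp (t * a) + (Y ω - a) * exp (t * b)) / (b - a) := by ring
    -- integrate
    have i1 : Integrable (fun ω => (b - Y ω) * exp (t * a)) μ :=
      ((integrable_const b).sub hYint).mul_const _
    have i2 : Integrable (fun ω => (Y ω - a) * exp (t * b)) μ :=
      (hYint.sub (integrable_const a)).mul_const _
    have hint2 : Integrable (fun ω => ((b - Y ω) * exp (t * a) + (Y ω - a) * exp (t * b)) / (b - a)) μ := by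
      exact (i1.add i2).div_const _
    have hexpm : AEStronglyMeasurable (fun ω => exp (t * Y ω)) μ :=
      Real.continuous_exp.comp_aestronglyMeasurable (hYm.const_mul t)
    have hexpint : Integrable (fun ω => exp (t * Y ω)) μ := by
      refine Integrable.mono' hint2 hexpm ?_
      filter_upwards [hpt, hY] with ω h1 h2
      rw [Real.norm_eq_abs, abs_of_pos (exp_pos _)]
      exact h1
    have hint3 := integral_mono_ae hexpint hint2 hpt
    have hval : ∫ ω, ((b - Y ω) * exp (t * a) + (Y ω - a) * exp (t * b)) / (b - a) ∂μ
        = (b * exp (t * a) - a * exp (t * b)) / (b - a) := by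
      rw [integral_div]
      congr 1
      rw [integral_add i1 i2, integral_mul_const, integral_mul_const,
        integral_sub (integrable_const b) hYint, integral_sub hYint (integrable_const a)]
      simp [hmean]
      ring
    rw [hval] at hint3
    refine hint3.trans ?_
    -- now the analytic bound
    set p : ℝ := -a / (b - a) with hp_def
    have hp0 : 0 ≤ p := div_nonneg (by linarith) hba.le
    have hp1 : p ≤ 1 := by
      rw [div_le_one hba]; linarith
    have key := hoeff_key hp0 hp1 (t * (b - a))
    have heq1 : (b * exp (t * a) - a * exp (t * b)) / (b - a)
        = exp (t * a) * (1 - p + p * exp (t * (b - a))) := by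
      have : exp (t * b) = exp (t * a) * exp (t * (b - a)) := by
        rw [← Real.exp_add]; ring_nf
      rw [this, hp_def]
      field_simp
      ring
    have heq2 : exp (t * a) * exp (p * (t * (b - a)) + (t * (b - a)) ^ 2 / 8)
        = exp (t ^ 2 * (b - a) ^ 2 / 8) := by
      rw [← Real.exp_add]
      congr 1
      rw [hp_def]
      field_simp
      ring
    calc (b * exp (t * a) - a * exp (t * b)) / (b - a)
        = exp (t * a) * (1 - p + p * exp (t * (b - a))) := heq1
      _ ≤ exp (t * a) * exp (p * (t * (b - a)) + (t * (b - a)) ^ 2 / 8) := by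
          exact mul_le_mul_of_nonneg_left key (exp_pos _).le
      _ = exp (t ^ 2 * (b - a) ^ 2 / 8) := heq2

/-- **Gibbs' inequality**: KL divergence between probability measures is nonnegative. -/
lemma gibbs_nonneg {α : Type*} [MeasurableSpace α] (μ ν : Measure α)
    [IsProbabilityMeasure μ] [IsProbabilityMeasure ν] (hμν : μ ≪ ν)
    (hint : Integrable (llr μ ν) μ) : 0 ≤ ∫ x, llr μ ν x ∂μ := by
  have hexp : (fun x => exp (- llr μ ν x)) =ᵐ[μ] fun x => (ν.rnDeriv μ x).toReal :=
    exp_neg_llr hμν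
  have hexpint : Integrable (fun x => exp (- llr μ ν x)) μ :=
    (Measure.integrable_toReal_rnDeriv).congr hexp.symm
  have hle : ∫ x, exp (- llr μ ν x) ∂μ ≤ 1 := by
    rw [integral_congr_ae hexp]
    rw [Measure.integral_toReal_rnDeriv']
    have h1 : ν.real Set.univ = 1 := by simp
    have h2 : 0 ≤ (ν.singularPart μ).real Set.univ := measureReal_nonneg
    linarith
  have hpt : ∀ᵐ x ∂μ, 1 - exp (- llr μ ν x) ≤ llr μ ν x := by
    filter_upwards with x
    have := Real.add_one_le_exp (- llr μ ν x)
    linarith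
  have e1 : Integrable (fun x => 1 - exp (- llr μ ν x)) μ := (integrable_const 1).sub hexpint
  have := integral_mono_ae e1 hint hpt
  rw [integral_sub (integrable_const 1) hexpint] at this
  simp only [integral_const, measure_univ, ENNReal.toReal_one, smul_eq_mul, one_mul, probReal_univ, mul_one] at this
  linarith

/-- **Donsker–Varadhan** / Gibbs variational inequality. -/
lemma donsker_varadhan {α : Type*} [MeasurableSpace α] (ρ ν : Measure α)
    [IsProbabilityMeasure ρ] [IsProbabilityMeasure ν] (hac : ρ ≪ ν)
    (hllr : Integrable (llr ρ ν) ρ) {f : α → ℝ} (hf : Integrable f ρ)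
    (hfπ : Integrable (fun x => exp (f x)) ν) :
    ∫ x, f x ∂ρ ≤ ∫ x, llr ρ ν x ∂ρ + Real.log (∫ x, exp (f x) ∂ν) := by
  set σ := ν.tilted f with hσ
  haveI : IsProbabilityMeasure σ := isProbabilityMeasure_tilted hfπ
  have hacσ : ρ ≪ σ := hac.trans (absolutelyContinuous_tilted hfπ)
  have hintσ : Integrable (llr ρ σ) ρ :=
    integrable_llr_tilted_right hac hf hllr hfπ
  have h0 : (0:ℝ) ≤ ∫ x, llr ρ σ x ∂ρ := gibbs_nonneg ρ σ hacσ hintσ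
  have heq := integral_llr_tilted_right hac hf hfπ hllr
  rw [← hσ] at heq
  rw [heq] at h0
  linarith
end AuxiliaryLemmas

/-- Information-theoretic generalization bound: for an i.i.d. dataset
`D ∼ P^n`, a `[0,1]`-valued loss (`P`-a.e.), and any data-dependent output `A`,
`|E[L_P(A) − L̂_D(A)]| ≤ √(I(A; D) / (2n))`. -/
theorem expected_generalization_gap_le_sqrt_mutualInfo
    {Ω 𝒳 Θ : Type*} [MeasurableSpace Ω] [MeasurableSpace 𝒳] [MeasurableSpace Θ]
    (μ : Measure Ω) [IsProbabilityMeasure μ]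
    (P : Measure 𝒳) [IsProbabilityMeasure P]
    (n : ℕ) (hn : 0 < n)
    (ℓ : Θ → 𝒳 → ℝ) (hℓ : Measurable (Function.uncurry ℓ))
    (hbound : ∀ θ : Θ, ∀ᵐ x ∂P, ℓ θ x ∈ Set.Icc (0 : ℝ) 1)
    (D : Ω → Fin n → 𝒳) (hD : Measurable D)
    (hDlaw : μ.map D = Measure.pi fun _ : Fin n => P)
    (A : Ω → Θ) (hA : Measurable A) :
    ENNReal.ofReal
        |∫ ω, ((∫ x, ℓ (A ω) x ∂P) - (∑ i, ℓ (A ω) (D ω i)) / n) ∂μ|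
      ≤ (mutualInfo μ A D / (2 * n)) ^ (1/2 : ℝ) := by
  open Real in
  have hnR : (0:ℝ) < n := Nat.cast_pos.2 hn
  set Pn : Measure (Fin n → 𝒳) := Measure.pi (fun _ : Fin n => P) with hPn
  set ν : Measure Θ := μ.map A with hν
  set ρ : Measure (Θ × (Fin n → 𝒳)) := μ.map (fun ω => (A ω, D ω)) with hρ
  haveI : IsProbabilityMeasure ν := Measure.isProbabilityMeasure_map hA.aemeasurable
  haveI : IsProbabilityMeasure Pn := by infer_instance
  haveI : IsProbabilityMeasure ρ :=
    Measure.isProbabilityMeasure_map (hA.prodMk hD).aemeasurable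
  -- the loss average and gap function
  set L : Θ → ℝ := fun θ => ∫ x, ℓ θ x ∂P with hLdef
  have hLm : Measurable L :=
    hℓ.stronglyMeasurable.integral_prod_right'.measurable
  set g : Θ × (Fin n → 𝒳) → ℝ := fun z => L z.1 - (∑ i, ℓ z.1 (z.2 i)) / n with hgdef
  have hgm : Measurable g := by
    apply (hLm.comp measurable_fst).sub
    apply Measurable.div_const
    exact Finset.measurable_sum _ fun i _ =>
      hℓ.comp (measurable_fst.prodMk ((measurable_pi_apply i).comp measurable_snd))
  -- change of variables
  have key : ∫ z, g z ∂ρ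
      = ∫ ω, ((∫ x, ℓ (A ω) x ∂P) - (∑ i, ℓ (A ω) (D ω i)) / n) ∂μ := by
    rw [hρ, integral_map (hA.prodMk hD).aemeasurable hgm.aestronglyMeasurable]
  -- integrability and bounds for the loss
  have hℓθm : ∀ θ, Measurable (ℓ θ) := fun θ => hℓ.comp measurable_prodMk_left
  have hℓint : ∀ θ, Integrable (ℓ θ) P := by
    intro θ
    refine Integrable.mono' (integrable_const 1) (hℓθm θ).aestronglyMeasurable ?_
    filter_upwards [hbound θ] with x hx
    rw [Real.norm_eq_abs, abs_le]
    exact ⟨by linarith [hx.1], hx.2⟩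
  have hL01 : ∀ θ, L θ ∈ Set.Icc (0:ℝ) 1 := by
    intro θ
    constructor
    · exact integral_nonneg_of_ae ((hbound θ).mono fun x hx => hx.1)
    · have := integral_mono_ae (hℓint θ) (integrable_const 1)
        ((hbound θ).mono fun x hx => hx.2)
      simpa using this
  -- a.e. bounds under the product measure
  have hPn_ae : ∀ θ, ∀ᵐ d ∂Pn, ∀ i, ℓ θ (d i) ∈ Set.Icc (0:ℝ) 1 := by
    intro θ
    refine Filter.eventually_all.2 fun i => ?_
    have := (Measure.tendsto_eval_ae_ae (μ := fun _ : Fin n => P) (i := i)).eventually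
      (hbound θ)
    exact this
  have hπ_ae : ∀ᵐ z ∂(ν.prod Pn), ∀ i, ℓ z.1 (z.2 i) ∈ Set.Icc (0:ℝ) 1 := by
    have hs : MeasurableSet {z : Θ × (Fin n → 𝒳) | ∀ i, ℓ z.1 (z.2 i) ∈ Set.Icc (0:ℝ) 1} := by
      rw [Set.setOf_forall]
      exact MeasurableSet.iInter fun i =>
        (hℓ.comp (measurable_fst.prodMk ((measurable_pi_apply i).comp measurable_snd)))
          measurableSet_Icc
    rw [show (∀ᵐ z ∂(ν.prod Pn), ∀ i, ℓ z.1 (z.2 i) ∈ Set.Icc (0:ℝ) 1) ↔ _ from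
      Measure.ae_prod_mem_iff_ae_ae_mem hs]
    exact Filter.Eventually.of_forall fun θ => hPn_ae θ
  have hgbound : ∀ᵐ z ∂(ν.prod Pn), |g z| ≤ 1 := by
    filter_upwards [hπ_ae] with z hz
    have h1 : 0 ≤ ∑ i, ℓ z.1 (z.2 i) := Finset.sum_nonneg fun i _ => (hz i).1
    have h2 : ∑ i, ℓ z.1 (z.2 i) ≤ n := by
      calc ∑ i, ℓ z.1 (z.2 i) ≤ ∑ _i : Fin n, (1:ℝ) :=
            Finset.sum_le_sum fun i _ => (hz i).2
        _ = n := by simp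
    have h3 : 0 ≤ (∑ i, ℓ z.1 (z.2 i)) / n := div_nonneg h1 hnR.le
    have h4 : (∑ i, ℓ z.1 (z.2 i)) / n ≤ 1 := (div_le_one hnR).2 h2
    have h5 := hL01 z.1
    rw [abs_le]
    constructor
    · show -1 ≤ L z.1 - (∑ i, ℓ z.1 (z.2 i)) / n
      linarith [h5.1, h5.2, h3, h4]
    · show L z.1 - (∑ i, ℓ z.1 (z.2 i)) / n ≤ 1
      linarith [h5.1, h5.2, h3, h4]
  -- integrability of exp (t * g) under the product measure
  have hexpint : ∀ t : ℝ, Integrable (fun z => exp (t * g z)) (ν.prod Pn) := by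
    intro t
    refine Integrable.mono' (integrable_const (exp |t|))
      (measurable_exp.comp (hgm.const_mul t)).aestronglyMeasurable ?_
    filter_upwards [hgbound] with z hz
    rw [Real.norm_eq_abs, abs_of_pos (exp_pos _), Real.exp_le_exp]
    calc t * g z ≤ |t * g z| := le_abs_self _
      _ = |t| * |g z| := abs_mul _ _
      _ ≤ |t| * 1 := by
          exact mul_le_mul_of_nonneg_left hz (abs_nonneg t)
      _ = |t| := mul_one _
  -- per-θ MGF bound via Hoeffding
  have hmgfθ : ∀ (t : ℝ) (θ : Θ), ∫ d, exp (t * g (θ, d)) ∂Pn ≤ exp (t^2 / (8*n)) := by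
    intro t θ
    have hid : ∀ d : Fin n → 𝒳,
        exp (t * g (θ, d)) = ∏ i, exp ((t/n) * (L θ - ℓ θ (d i))) := by
      intro d
      rw [← Real.exp_sum]
      congr 1
      rw [← Finset.mul_sum, Finset.sum_sub_distrib, Finset.sum_const, Finset.card_univ,
        Fintype.card_fin, nsmul_eq_mul]
      show t * (L θ - (∑ i, ℓ θ (d i)) / n) = t / n * ((n : ℝ) * L θ - ∑ i, ℓ θ (d i))
      field_simp
      try ring
      try tauto
    simp_rw [hid]
    -- use the pi-integral factorization
    letI : MeasureSpace 𝒳 := { volume := P }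
    haveI : SigmaFinite (volume : Measure 𝒳) := by
      show SigmaFinite P; infer_instance
    have hvol : Pn = (volume : Measure (Fin n → 𝒳)) := by
      rw [hPn]; rfl
    rw [hPn, integral_fin_nat_prod_eq_prod (fun i x => exp ((t/n) * (L θ - ℓ θ x)))]
    have hsingle : ∀ i : Fin n, ∫ x, exp ((t/n) * (L θ - ℓ θ x)) ∂P
        ≤ exp ((t/n)^2 * (L θ - (L θ - 1))^2 / 8) := by
      intro i
      refine hoeffding_lemma P (Y := fun x => L θ - ℓ θ x) (((measurable_const.sub (hℓθm θ))).aestronglyMeasurable)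
        ?_ ?_ (t/n)
      · filter_upwards [hbound θ] with x hx
        exact ⟨by linarith [hx.2], by linarith [hx.1]⟩
      · rw [integral_sub (integrable_const _) (hℓint θ)]
        simp [hLdef]
    have hnonneg : ∀ i ∈ (Finset.univ : Finset (Fin n)), (0:ℝ) ≤ ∫ x, exp ((t/n) * (L θ - ℓ θ x)) ∂P :=
      fun i _ => integral_nonneg fun x => (exp_pos _).le
    calc ∏ _i : Fin n, ∫ x, exp ((t/n) * (L θ - ℓ θ x)) ∂P
        ≤ ∏ _i : Fin n, exp ((t/n)^2 * (L θ - (L θ - 1))^2 / 8) :=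
          Finset.prod_le_prod hnonneg fun i _ => hsingle i
      _ = exp ((t/n)^2 * (L θ - (L θ - 1))^2 / 8) ^ n := by
          rw [Finset.prod_const, Finset.card_univ, Fintype.card_fin]
      _ = exp (t^2 / (8*n)) := by
          rw [← Real.exp_nat_mul]
          congr 1
          field_simp
          ring
  -- full MGF bound
  have hmgf : ∀ t : ℝ, ∫ z, exp (t * g z) ∂(ν.prod Pn) ≤ exp (t^2 / (8*n)) := by
    intro t
    rw [integral_prod _ (hexpint t)]
    calc ∫ θ, ∫ d, exp (t * g (θ, d)) ∂Pn ∂ν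
        ≤ ∫ _θ, exp (t^2 / (8*n)) ∂ν := by
          refine integral_mono_ae ((hexpint t).integral_prod_left) (integrable_const _) ?_
          exact Filter.Eventually.of_forall fun θ => hmgfθ t θ
      _ = exp (t^2 / (8*n)) := by simp
  -- case split on finiteness of the mutual information
  by_cases hKL : ρ ≪ ν.prod Pn ∧ Integrable (llr ρ (ν.prod Pn)) ρ
  · obtain ⟨hac, hllr⟩ := hKL
    have hmi : mutualInfo μ A D = ENNReal.ofReal (∫ z, llr ρ (ν.prod Pn) z ∂ρ) := by
      have h0 : mutualInfo μ A D = klDiv ρ (ν.prod (Measure.map D μ)) := rfl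
      rw [h0, hDlaw]
      unfold klDiv
      rw [if_pos]
      exact ⟨hac, hllr⟩
    set K := ∫ z, llr ρ (ν.prod Pn) z ∂ρ with hK
    have hK0 : 0 ≤ K := gibbs_nonneg ρ (ν.prod Pn) hac hllr
    have hgρb : ∀ᵐ z ∂ρ, |g z| ≤ 1 := hac.ae_le hgbound
    have hgint : Integrable g ρ := by
      refine Integrable.mono' (integrable_const 1) hgm.aestronglyMeasurable ?_
      filter_upwards [hgρb] with z hz
      rwa [Real.norm_eq_abs]
    set E := ∫ z, g z ∂ρ with hE
    have hEb : ∀ t : ℝ, t * E ≤ K + t^2 / (8*n) := by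
      intro t
      have hdv := donsker_varadhan ρ (ν.prod Pn) hac hllr (hgint.const_mul t) (hexpint t)
      rw [integral_const_mul] at hdv
      have hlog : Real.log (∫ z, exp (t * g z) ∂(ν.prod Pn)) ≤ t^2/(8*n) := by
        have hpos : 0 < ∫ z, exp (t * g z) ∂(ν.prod Pn) := integral_exp_pos (hexpint t)
        calc Real.log (∫ z, exp (t * g z) ∂(ν.prod Pn))
            ≤ Real.log (exp (t^2/(8*n))) := Real.log_le_log hpos (hmgf t)
          _ = t^2/(8*n) := Real.log_exp _
      rw [← hE, ← hK] at hdv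
      linarith
    have hAbs : ∀ t : ℝ, 0 < t → |E| ≤ (K + t^2/(8*n)) / t := by
      intro t ht
      rw [le_div_iff₀ ht]
      rcases abs_cases E with ⟨he, _⟩ | ⟨he, _⟩
      · rw [he, mul_comm]; exact hEb t
      · rw [he]
        calc -E * t = -t * E := by ring
          _ ≤ K + (-t)^2/(8*n) := hEb (-t)
          _ = K + t^2/(8*n) := by ring_nf
    have habs : |E| ≤ Real.sqrt (K / (2*n)) := by
      rcases eq_or_lt_of_le hK0 with hKz | hKz
      · have hE0 : |E| ≤ 0 := by
          by_contra hcon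
          push_neg at hcon
          have ht : (0:ℝ) < 4*n*|E| := by positivity
          have h2 := hAbs _ ht
          rw [← hKz] at h2
          have h3 : ((0:ℝ) + (4*↑n*|E|)^2/(8*↑n))/(4*↑n*|E|) = |E|/2 := by
            field_simp
            ring
          rw [h3] at h2
          linarith
        exact hE0.trans (Real.sqrt_nonneg _)
      · set s := Real.sqrt (K/(2*n)) with hs
        have hs2 : s^2 = K/(2*n) := Real.sq_sqrt (by positivity)
        have hspos : 0 < s := Real.sqrt_pos.2 (by positivity)
        have hKval : K = 2*n*s^2 := by rw [hs2]; field_simp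
        have ht : (0:ℝ) < 4*n*s := by positivity
        have h2 := hAbs _ ht
        have heqv : (K + (4*n*s)^2/(8*n)) / (4*n*s) = s := by
          rw [hKval]; field_simp; ring
        rwa [heqv] at h2
    rw [← key]
    calc ENNReal.ofReal |E| ≤ ENNReal.ofReal (Real.sqrt (K/(2*n))) :=
          ENNReal.ofReal_le_ofReal habs
      _ = (mutualInfo μ A D / (2*(n:ℝ≥0∞)))^(1/2:ℝ) := by
          rw [hmi, Real.sqrt_eq_rpow,
            ← ENNReal.ofReal_rpow_of_nonneg (div_nonneg hK0 (by positivity))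
              (by norm_num : (0:ℝ) ≤ 1/2)]
          congr 1
          rw [ENNReal.ofReal_div_of_pos (by positivity),
            ENNReal.ofReal_mul (by norm_num : (0:ℝ) ≤ 2)]
          norm_num
  · have hmi : mutualInfo μ A D = ⊤ := by
      have h0 : mutualInfo μ A D = klDiv ρ (ν.prod (Measure.map D μ)) := rfl
      rw [h0, hDlaw]
      unfold klDiv
      rw [if_neg]
      exact hKL
    rw [hmi]
    have h2n : (2*(n:ℝ≥0∞)) ≠ ⊤ := by
      exact ENNReal.mul_ne_top (by simp) (ENNReal.natCast_ne_top n)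
    rw [ENNReal.top_div_of_ne_top h2n, ENNReal.top_rpow_of_pos (by norm_num)]
    exact le_top
end

section
/- Let P be a probability distribution on an instance space X, let the per-instance loss satisfy 0 ≤ ℓ(θ; x) ≤ 1 for every θ ∈ Θ and P-almost every x, let D = (x_1, …, x_n) be an i.i.d. sample from P^n, and let A = A(D) be any data-dependent random variable taking values in Θ. Then for every λ > 0, the mutual information satisfies I(A; D) ≥ λ · E[ L_P(A) − L̂_D(A) ] − λ² / (8n); consequently, E[ L_P(A) − L̂_D(A) ] ≤ I(A; D)/λ + λ/(8n) for every λ > 0. -/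
open MeasureTheory ProbabilityTheory
open scoped ENNReal

lemma hoeff_scalar (m : ℝ) (hm0 : 0 ≤ m) (hm1 : m ≤ 1) (s : ℝ) :
    Real.log (1 - m + m * Real.exp s) ≤ m * s + s ^ 2 / 8 := by
  set u : ℝ → ℝ := fun s => 1 - m + m * Real.exp s with hu_def
  have upos : ∀ s, 0 < u s := by
    intro s
    rcases lt_or_ge m 1 with h | h
    · have : 0 ≤ m * Real.exp s := mul_nonneg hm0 (Real.exp_pos s).le
      simp only [hu_def]; linarith
    · have hm : m = 1 := le_antisymm hm1 h
      simp only [hu_def, hm]; have := Real.exp_pos s; linarith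
  have hu : ∀ s, HasDerivAt u (m * Real.exp s) s := by
    intro s
    exact ((Real.hasDerivAt_exp s).const_mul m).const_add (1 - m)
  set g : ℝ → ℝ := fun s => Real.log (u s) - (m * s + s ^ 2 / 8) with hg_def
  set h : ℝ → ℝ := fun s => m * Real.exp s / u s - (m + s / 4) with hh_def
  have hg : ∀ s, HasDerivAt g (h s) s := by
    intro s
    have h1 : HasDerivAt (fun s => Real.log (u s)) (m * Real.exp s / u s) s :=
      (hu s).log (upos s).ne'
    have h2 : HasDerivAt (fun s : ℝ => m * s + s ^ 2 / 8) (m + s / 4) s := by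
      have := ((hasDerivAt_id s).const_mul m).add
        (((hasDerivAt_pow 2 s)).div_const 8)
      refine this.congr_deriv ?_
      ring
    exact h1.sub h2
  have hh : ∀ s, HasDerivAt h (((m * Real.exp s) * u s - (m * Real.exp s) * (m * Real.exp s)) / (u s) ^ 2 - 1 / 4) s := by
    intro s
    have h1 : HasDerivAt (fun s => m * Real.exp s / u s)
        (((m * Real.exp s) * u s - (m * Real.exp s) * (m * Real.exp s)) / (u s) ^ 2) s :=
      ((Real.hasDerivAt_exp s).const_mul m).div (hu s) (upos s).ne'
    have h2 : HasDerivAt (fun s : ℝ => m + s / 4) (1 / 4) s := by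
      simpa using (((hasDerivAt_id s)).div_const 4).const_add m
    exact h1.sub h2
  have hh' : ∀ s, deriv h s ≤ 0 := by
    intro s
    rw [(hh s).deriv]
    set A := m * Real.exp s
    have hA : 0 ≤ A := mul_nonneg hm0 (Real.exp_pos s).le
    have hU := upos s
    have : (A * u s - A * A) / (u s) ^ 2 ≤ 1 / 4 := by
      rw [div_le_iff₀ (by positivity)]
      nlinarith [sq_nonneg (u s / 2 - A)]
    linarith
  have hanti : Antitone h :=
    antitone_of_deriv_nonpos (fun s => (hh s).differentiableAt) hh'
  have h0 : h 0 = 0 := by simp [hh_def, hu_def]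
  have hg0 : g 0 = 0 := by
    have : u 0 = 1 := by simp [hu_def]
    simp [hg_def, this]
  have key : g s ≤ 0 := by
    rcases le_or_gt s 0 with hs | hs
    · have hmono : MonotoneOn g (Set.Iic (0 : ℝ)) := by
        apply monotoneOn_of_deriv_nonneg (convex_Iic 0)
          (fun x _ => ((hg x).differentiableAt.continuousAt).continuousWithinAt)
          (fun x _ => (hg x).differentiableAt.differentiableWithinAt)
        intro x hx
        rw [(hg x).deriv]
        have : h 0 ≤ h x := hanti (le_of_lt (by simpa using hx))
        rw [h0] at this; linarith
      have := hmono (Set.mem_Iic.2 hs) (Set.mem_Iic.2 le_rfl) hs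
      rw [hg0] at this; linarith
    · have hmono : AntitoneOn g (Set.Ici (0 : ℝ)) := by
        apply antitoneOn_of_deriv_nonpos (convex_Ici 0)
          (fun x _ => ((hg x).differentiableAt.continuousAt).continuousWithinAt)
          (fun x _ => (hg x).differentiableAt.differentiableWithinAt)
        intro x hx
        rw [(hg x).deriv]
        have : h x ≤ h 0 := hanti (le_of_lt (by simpa using hx))
        rw [h0] at this; linarith
      have := hmono (Set.mem_Ici.2 le_rfl) (Set.mem_Ici.2 hs.le) hs.le
      rw [hg0] at this; linarith
  simpa [hg_def, sub_nonpos] using key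

lemma mgf_one {𝒳 : Type*} [MeasurableSpace 𝒳] (P : Measure 𝒳) [IsProbabilityMeasure P]
    (f : 𝒳 → ℝ) (hf : Measurable f) (hb : ∀ᵐ x ∂P, f x ∈ Set.Icc (0:ℝ) 1) (t : ℝ) :
    ∫ x, Real.exp (t * ((∫ y, f y ∂P) - f x)) ∂P ≤ Real.exp (t ^ 2 / 8) := by
  have hfint : Integrable f P := by
    refine (integrable_const (1 : ℝ)).mono' hf.aestronglyMeasurable ?_
    filter_upwards [hb] with x hx
    rw [Real.norm_eq_abs]; exact abs_le.2 ⟨by linarith [hx.1], hx.2⟩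
  set m := ∫ y, f y ∂P with hm_def
  have hm0 : 0 ≤ m := integral_nonneg_of_ae (hb.mono fun x hx => hx.1)
  have hm1 : m ≤ 1 := by
    have := integral_mono_ae hfint (integrable_const (1 : ℝ)) (hb.mono fun x hx => hx.2)
    simpa using this
  -- pointwise convexity bound
  have hpt : ∀ᵐ x ∂P, Real.exp (t * (m - f x)) ≤
      Real.exp (t * m) * ((1 - f x) + f x * Real.exp (-t)) := by
    filter_upwards [hb] with x hx
    have hconv := convexOn_exp.2 (Set.mem_univ (0 : ℝ)) (Set.mem_univ (-t))
      (by linarith [hx.2] : (0:ℝ) ≤ 1 - f x) hx.1 (by ring)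
    simp only [smul_eq_mul, mul_zero, zero_add, Real.exp_zero, mul_one] at hconv
    have h1 : Real.exp (t * (m - f x)) = Real.exp (t * m) * Real.exp (f x * -t) := by
      rw [← Real.exp_add]; ring_nf
    rw [h1]
    have := mul_le_mul_of_nonneg_left hconv (Real.exp_pos (t * m)).le
    convert this using 3
  -- integrability of LHS
  have hLint : Integrable (fun x => Real.exp (t * (m - f x))) P := by
    refine (integrable_const (Real.exp |t|)).mono'
      ((hf.const_sub m).const_mul t).exp.aestronglyMeasurable ?_
    filter_upwards [hb] with x hx
    rw [Real.norm_eq_abs, abs_of_pos (Real.exp_pos _)]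
    apply Real.exp_le_exp.2
    have h1 : |m - f x| ≤ 1 := abs_le.2 ⟨by linarith [hx.2], by linarith [hx.1]⟩
    calc t * (m - f x) ≤ |t * (m - f x)| := le_abs_self _
      _ = |t| * |m - f x| := abs_mul _ _
      _ ≤ |t| * 1 := by exact mul_le_mul_of_nonneg_left h1 (abs_nonneg t)
      _ = |t| := mul_one _
  have hRint : Integrable (fun x => Real.exp (t * m) * ((1 - f x) + f x * Real.exp (-t))) P := by
    exact (((integrable_const (1:ℝ)).sub hfint).add (hfint.mul_const _)).const_mul _
  have hint_le := integral_mono_ae hLint hRint hpt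
  have hval : ∫ x, Real.exp (t * m) * ((1 - f x) + f x * Real.exp (-t)) ∂P
      = Real.exp (t * m) * (1 - m + m * Real.exp (-t)) := by
    rw [integral_const_mul]
    congr 1
    have e1 : ∀ a, (1:ℝ) - f a + f a * Real.exp (-t) = 1 + (Real.exp (-t) - 1) * f a := by
      intro a; ring
    simp_rw [e1]
    rw [integral_add (integrable_const (1:ℝ)) (hfint.const_mul _), integral_const_mul]
    simp [← hm_def]
    ring
  rw [hval] at hint_le
  refine hint_le.trans ?_
  have hlog := hoeff_scalar m hm0 hm1 (-t)
  have hpos : 0 < 1 - m + m * Real.exp (-t) := by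
    rcases lt_or_ge m 1 with h | h
    · have : 0 ≤ m * Real.exp (-t) := mul_nonneg hm0 (Real.exp_pos _).le
      linarith
    · have hm : m = 1 := le_antisymm hm1 h
      simp [hm]; positivity
  have h2 : 1 - m + m * Real.exp (-t) ≤ Real.exp (m * -t + (-t) ^ 2 / 8) :=
    (Real.log_le_iff_le_exp hpos).1 hlog
  calc Real.exp (t * m) * (1 - m + m * Real.exp (-t))
      ≤ Real.exp (t * m) * Real.exp (m * -t + (-t) ^ 2 / 8) :=
        mul_le_mul_of_nonneg_left h2 (Real.exp_pos _).le
    _ = Real.exp (t ^ 2 / 8) := by rw [← Real.exp_add]; ring_nf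

lemma mgf_pi {𝒳 : Type*} [MeasurableSpace 𝒳] (P : Measure 𝒳) [IsProbabilityMeasure P]
    (n : ℕ) (hn : 0 < n)
    (f : 𝒳 → ℝ) (hf : Measurable f) (hb : ∀ᵐ x ∂P, f x ∈ Set.Icc (0:ℝ) 1) (t : ℝ) :
    ∫ d : Fin n → 𝒳, Real.exp (t * ((∫ y, f y ∂P) - (∑ i, f (d i)) / n))
      ∂(Measure.pi fun _ : Fin n => P) ≤ Real.exp (t ^ 2 / (8 * n)) := by
  letI : MeasureSpace 𝒳 := ⟨P⟩
  have hvol : (volume : Measure 𝒳) = P := rfl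
  set m := ∫ y, f y ∂P with hm_def
  have hn' : (n : ℝ) ≠ 0 := Nat.cast_ne_zero.2 hn.ne'
  have hsplit : ∀ d : Fin n → 𝒳,
      Real.exp (t * (m - (∑ i, f (d i)) / n)) = ∏ i, Real.exp ((t / n) * (m - f (d i))) := by
    intro d
    rw [← Real.exp_sum]
    congr 1
    simp_rw [mul_sub]
    rw [Finset.sum_sub_distrib, Finset.sum_const, ← Finset.mul_sum]
    simp only [Finset.card_univ, Fintype.card_fin, nsmul_eq_mul]
    field_simp
  simp_rw [hsplit]
  have hpi : (Measure.pi fun _ : Fin n => P) = (volume : Measure (Fin n → 𝒳)) := rfl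
  rw [hpi]
  rw [← hpi, MeasureTheory.integral_fintype_prod_eq_pow (ι := Fin n) (μ := P) (fun x => Real.exp ((t / n) * (m - f x)))]
  have hone := mgf_one P f hf hb (t / n)
  have hnn : 0 ≤ ∫ x, Real.exp ((t / n) * (m - f x)) ∂P :=
    integral_nonneg fun x => (Real.exp_pos _).le
  calc (∫ x : 𝒳, Real.exp ((t / n) * (m - f x))) ^ Fintype.card (Fin n)
      ≤ (Real.exp ((t / n) ^ 2 / 8)) ^ Fintype.card (Fin n) := by
        apply pow_le_pow_left₀ hnn
        simpa [hvol, ← hm_def] using hone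
    _ = Real.exp (t ^ 2 / (8 * n)) := by
        rw [Fintype.card_fin, ← Real.exp_nat_mul]
        congr 1
        field_simp

lemma dv_ineq {α : Type*} [MeasurableSpace α] (μp νq : Measure α)
    [IsProbabilityMeasure μp] [IsProbabilityMeasure νq]
    (hac : μp ≪ νq) (hllr : Integrable (llr μp νq) μp)
    (f : α → ℝ) (hf : Measurable f) (C : ℝ) (hC : ∀ᵐ x ∂νq, |f x| ≤ C) :
    ∫ x, f x ∂μp ≤ (∫ x, llr μp νq x ∂μp) + Real.log (∫ x, Real.exp (f x) ∂νq) := by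
  have hCμp : ∀ᵐ x ∂μp, |f x| ≤ C := hac.ae_le hC
  have hfμp : Integrable f μp :=
    (integrable_const C).mono' hf.aestronglyMeasurable
      (hCμp.mono fun x hx => by rwa [Real.norm_eq_abs])
  -- the density facts
  have hpos : ∀ᵐ x ∂μp, 0 < ((μp.rnDeriv νq x).toReal) := by
    filter_upwards [Measure.rnDeriv_pos hac, hac.ae_le (Measure.rnDeriv_lt_top μp νq)]
      with x h1 h2
    exact ENNReal.toReal_pos h1.ne' h2.ne
  -- exp (f - llr) equals exp f * (toReal)⁻¹ a.e. μp
  have hexp_eq : ∀ᵐ x ∂μp, Real.exp (f x - llr μp νq x)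
      = Real.exp (f x) * ((μp.rnDeriv νq x).toReal)⁻¹ := by
    filter_upwards [hpos] with x hx
    rw [llr, Real.exp_sub, Real.exp_log hx]
    rfl
  -- measurability of the auxiliary function on νq side
  have hmeas_aux : Measurable fun x => (μp.rnDeriv νq x).toReal *
      (Real.exp (f x) * ((μp.rnDeriv νq x).toReal)⁻¹) :=
    ((Measure.measurable_rnDeriv μp νq).ennreal_toReal).mul
      (hf.exp.mul ((Measure.measurable_rnDeriv μp νq).ennreal_toReal.inv))
  -- the key identity / bound : ∫ exp(f - llr) dμp ≤ ∫ exp f dνq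
  have haux_le : ∀ x, (μp.rnDeriv νq x).toReal *
      (Real.exp (f x) * ((μp.rnDeriv νq x).toReal)⁻¹) ≤ Real.exp (f x) := by
    intro x
    set r := (μp.rnDeriv νq x).toReal with hr
    rcases eq_or_ne r 0 with h | h
    · rw [h]; simp [(Real.exp_pos (f x)).le]
    · rw [mul_comm (Real.exp (f x)) r⁻¹, ← mul_assoc, mul_inv_cancel₀ h, one_mul]
  have hexpfνq : Integrable (fun x => Real.exp (f x)) νq := by
    refine (integrable_const (Real.exp C)).mono' hf.exp.aestronglyMeasurable ?_
    filter_upwards [hC] with x hx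
    rw [Real.norm_eq_abs, abs_of_pos (Real.exp_pos _)]
    exact Real.exp_le_exp.2 (le_trans (le_abs_self _) hx)
  have haux_int : Integrable (fun x => (μp.rnDeriv νq x).toReal *
      (Real.exp (f x) * ((μp.rnDeriv νq x).toReal)⁻¹)) νq := by
    refine hexpfνq.mono' hmeas_aux.aestronglyMeasurable ?_
    refine Filter.Eventually.of_forall fun x => ?_
    rw [Real.norm_eq_abs, abs_of_nonneg]
    · exact haux_le x
    · positivity
  have hint_smul : ∫ x, (μp.rnDeriv νq x).toReal •
        (Real.exp (f x) * ((μp.rnDeriv νq x).toReal)⁻¹) ∂νq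
      = ∫ x, Real.exp (f x) * ((μp.rnDeriv νq x).toReal)⁻¹ ∂μp :=
    MeasureTheory.integral_rnDeriv_smul hac
  have hkey : ∫ x, Real.exp (f x - llr μp νq x) ∂μp ≤ ∫ x, Real.exp (f x) ∂νq := by
    rw [integral_congr_ae hexp_eq, ← hint_smul]
    exact integral_mono haux_int hexpfνq haux_le
  -- integrability of exp (f - llr) wrt μp
  have hint_exp_sub : Integrable (fun x => Real.exp (f x - llr μp νq x)) μp := by
    have h1 : Integrable (fun x => Real.exp (f x) * ((μp.rnDeriv νq x).toReal)⁻¹) μp := by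
      rw [← MeasureTheory.integrable_rnDeriv_smul_iff hac]
      exact haux_int
    exact h1.congr (hexp_eq.mono fun x hx => hx.symm)
  -- Jensen
  have hgint : Integrable (fun x => f x - llr μp νq x) μp := hfμp.sub hllr
  have hjensen : Real.exp (∫ x, (f x - llr μp νq x) ∂μp)
      ≤ ∫ x, Real.exp (f x - llr μp νq x) ∂μp := by
    have := convexOn_exp.map_integral_le (μ := μp) (f := fun x => f x - llr μp νq x)
      Real.continuous_exp.continuousOn isClosed_univ
      (Filter.Eventually.of_forall fun x => Set.mem_univ _) hgint ?_
    · exact this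
    · exact hint_exp_sub
  -- positivity of ∫ exp f dνq
  have hZpos : 0 < ∫ x, Real.exp (f x) ∂νq := by
    have : Real.exp (-C) = ∫ _ : α, Real.exp (-C) ∂νq := by simp
    rw [show (0:ℝ) < ∫ x, Real.exp (f x) ∂νq ↔ (0:ℝ) < ∫ x, Real.exp (f x) ∂νq from Iff.rfl]
    have hle : Real.exp (-C) ≤ ∫ x, Real.exp (f x) ∂νq := by
      rw [this]
      refine integral_mono_ae (integrable_const _) hexpfνq ?_
      filter_upwards [hC] with x hx
      exact Real.exp_le_exp.2 (by cases' abs_le.1 hx with h1 h2; linarith)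
    linarith [Real.exp_pos (-C)]
  have := hjensen.trans hkey
  have hlog : ∫ x, (f x - llr μp νq x) ∂μp ≤ Real.log (∫ x, Real.exp (f x) ∂νq) :=
    (Real.le_log_iff_exp_le hZpos).2 this
  rw [integral_sub hfμp hllr] at hlog
  linarith

/-- Donsker–Varadhan consequence: for an i.i.d. dataset `D ∼ P^n`,
a `[0,1]`-valued loss (`P`-a.e.), and any data-dependent output `A`, for every `λ > 0`,
`I(A; D) ≥ λ · E[L_P(A) − L̂_D(A)] − λ²/(8n)`, and consequently
`E[L_P(A) − L̂_D(A)] ≤ I(A; D)/λ + λ/(8n)`. -/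
theorem mutualInfo_ge_and_expected_gap_le
    {Ω 𝒳 Θ : Type*} [MeasurableSpace Ω] [MeasurableSpace 𝒳] [MeasurableSpace Θ]
    (μ : Measure Ω) [IsProbabilityMeasure μ]
    (P : Measure 𝒳) [IsProbabilityMeasure P]
    (n : ℕ) (hn : 0 < n)
    (ℓ : Θ → 𝒳 → ℝ) (hℓ : Measurable (Function.uncurry ℓ))
    (hbound : ∀ θ : Θ, ∀ᵐ x ∂P, ℓ θ x ∈ Set.Icc (0 : ℝ) 1)
    (D : Ω → Fin n → 𝒳) (hD : Measurable D)
    (hDlaw : μ.map D = Measure.pi fun _ : Fin n => P)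
    (A : Ω → Θ) (hA : Measurable A) :
    ∀ lam : ℝ, 0 < lam →
      ENNReal.ofReal
          (lam * (∫ ω, ((∫ x, ℓ (A ω) x ∂P) - (∑ i, ℓ (A ω) (D ω i)) / n) ∂μ)
            - lam ^ 2 / (8 * n))
        ≤ mutualInfo μ A D
      ∧
      ENNReal.ofReal
          (∫ ω, ((∫ x, ℓ (A ω) x ∂P) - (∑ i, ℓ (A ω) (D ω i)) / n) ∂μ)
        ≤ mutualInfo μ A D / ENNReal.ofReal lam + ENNReal.ofReal (lam / (8 * n)) := by
  intro lam hlam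
  have hn' : ((n : ℝ)) ≠ 0 := Nat.cast_ne_zero.2 hn.ne'
  have hnpos : (0 : ℝ) < n := Nat.cast_pos.2 hn
  -- set up measures
  set π : Measure (Θ × (Fin n → 𝒳)) := μ.map fun ω => (A ω, D ω) with hπ_def
  set ρ : Measure (Θ × (Fin n → 𝒳)) := (μ.map A).prod (μ.map D) with hρ_def
  have hAD : Measurable fun ω => (A ω, D ω) := hA.prodMk hD
  haveI : IsProbabilityMeasure π := Measure.isProbabilityMeasure_map hAD.aemeasurable
  haveI : IsProbabilityMeasure (μ.map A) := Measure.isProbabilityMeasure_map hA.aemeasurable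
  haveI : IsProbabilityMeasure (μ.map D) := Measure.isProbabilityMeasure_map hD.aemeasurable
  haveI : IsProbabilityMeasure ρ := by rw [hρ_def]; infer_instance
  have hMI : mutualInfo μ A D = klDiv π ρ := rfl
  -- the function F
  set F : Θ × (Fin n → 𝒳) → ℝ :=
    fun p => lam * ((∫ x, ℓ p.1 x ∂P) - (∑ i, ℓ p.1 (p.2 i)) / n) with hF_def
  have hlθ : ∀ θ, Measurable (ℓ θ) := fun θ => hℓ.comp measurable_prodMk_left
  have hm_meas : StronglyMeasurable fun θ => ∫ x, ℓ θ x ∂P :=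
    hℓ.stronglyMeasurable.integral_prod_right
  have hF_meas : Measurable F := by
    apply Measurable.const_mul
    exact (hm_meas.measurable.comp measurable_fst).sub
      ((Finset.measurable_sum Finset.univ fun i _ =>
        hℓ.comp (measurable_fst.prodMk ((measurable_pi_apply i).comp measurable_snd))).div_const _)
  -- bounds on the mean
  have hlint : ∀ θ, Integrable (ℓ θ) P := fun θ =>
    (integrable_const (1:ℝ)).mono' (hlθ θ).aestronglyMeasurable
      ((hbound θ).mono fun x hx => by
        rw [Real.norm_eq_abs]; exact abs_le.2 ⟨by linarith [hx.1], hx.2⟩)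
  have hm01 : ∀ θ, (∫ x, ℓ θ x ∂P) ∈ Set.Icc (0:ℝ) 1 := by
    intro θ
    constructor
    · exact integral_nonneg_of_ae ((hbound θ).mono fun x hx => hx.1)
    · have := integral_mono_ae (hlint θ) (integrable_const (1:ℝ))
        ((hbound θ).mono fun x hx => hx.2)
      simpa using this
  -- a.e. bound on ρ
  have hbound_ρ : ∀ᵐ p ∂ρ, ∀ i, ℓ p.1 (p.2 i) ∈ Set.Icc (0:ℝ) 1 := by
    rw [hρ_def]
    have hSmeas : MeasurableSet {p : Θ × (Fin n → 𝒳) | ∀ i, ℓ p.1 (p.2 i) ∈ Set.Icc (0:ℝ) 1} := by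
      have : {p : Θ × (Fin n → 𝒳) | ∀ i, ℓ p.1 (p.2 i) ∈ Set.Icc (0:ℝ) 1}
          = ⋂ i, (fun p : Θ × (Fin n → 𝒳) => ℓ p.1 (p.2 i)) ⁻¹' Set.Icc 0 1 := by
        ext p; simp
      rw [this]
      exact MeasurableSet.iInter fun i =>
        (hℓ.comp (measurable_fst.prodMk ((measurable_pi_apply i).comp measurable_snd)))
          measurableSet_Icc
    refine (Measure.ae_prod_iff_ae_ae hSmeas).2 ?_
    refine Filter.Eventually.of_forall fun θ => ?_
    rw [hDlaw, ae_all_iff]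
    intro i
    rw [ae_iff]
    exact Measure.pi_eval_preimage_null (μ := fun _ : Fin n => P) (i := i)
      (s := {x | ¬ ℓ θ x ∈ Set.Icc (0:ℝ) 1}) (ae_iff.1 (hbound θ))
  have hFbound : ∀ᵐ p ∂ρ, |F p| ≤ lam * 2 := by
    filter_upwards [hbound_ρ] with p hp
    have h1 : (0:ℝ) ≤ ∑ i, ℓ p.1 (p.2 i) := Finset.sum_nonneg fun i _ => (hp i).1
    have h2 : ∑ i, ℓ p.1 (p.2 i) ≤ (n:ℝ) := by
      calc ∑ i, ℓ p.1 (p.2 i) ≤ ∑ _i : Fin n, (1:ℝ) :=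
            Finset.sum_le_sum fun i _ => (hp i).2
        _ = n := by simp
    have h3 : (0:ℝ) ≤ (∑ i, ℓ p.1 (p.2 i)) / n := div_nonneg h1 hnpos.le
    have h4 : (∑ i, ℓ p.1 (p.2 i)) / n ≤ 1 := (div_le_one hnpos).2 h2
    have hm := hm01 p.1
    rw [hF_def, abs_mul, abs_of_pos hlam]
    have : |(∫ x, ℓ p.1 x ∂P) - (∑ i, ℓ p.1 (p.2 i)) / n| ≤ 1 :=
      abs_le.2 ⟨by linarith [hm.1, hm.2, h3, h4], by linarith [hm.1, hm.2, h3, h4]⟩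
    nlinarith
  -- integrability of exp ∘ F on ρ
  have hexpF_int : Integrable (fun p => Real.exp (F p)) ρ := by
    refine (integrable_const (Real.exp (lam * 2))).mono' hF_meas.exp.aestronglyMeasurable ?_
    filter_upwards [hFbound] with p hp
    rw [Real.norm_eq_abs, abs_of_pos (Real.exp_pos _)]
    exact Real.exp_le_exp.2 ((le_abs_self _).trans hp)
  -- bound on log ∫ exp F dρ
  have hZpos : (0:ℝ) < ∫ p, Real.exp (F p) ∂ρ := by
    have hle : Real.exp (-(lam * 2)) ≤ ∫ p, Real.exp (F p) ∂ρ := by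
      have : Real.exp (-(lam * 2)) = ∫ _ : Θ × (Fin n → 𝒳), Real.exp (-(lam * 2)) ∂ρ := by simp
      rw [this]
      refine integral_mono_ae (integrable_const _) hexpF_int ?_
      filter_upwards [hFbound] with p hp
      exact Real.exp_le_exp.2 (by cases' abs_le.1 hp with ha hb; linarith)
    linarith [Real.exp_pos (-(lam * 2))]
  have hZle : ∫ p, Real.exp (F p) ∂ρ ≤ Real.exp (lam ^ 2 / (8 * n)) := by
    rw [hρ_def] at hexpF_int ⊢
    rw [integral_prod _ hexpF_int]
    have hinner : ∀ θ : Θ,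
        ∫ d, Real.exp (F (θ, d)) ∂(μ.map D) ≤ Real.exp (lam ^ 2 / (8 * n)) := by
      intro θ
      rw [hDlaw]
      exact mgf_pi P n hn (ℓ θ) (hlθ θ) (hbound θ) lam
    calc ∫ θ, ∫ d, Real.exp (F (θ, d)) ∂(μ.map D) ∂(μ.map A)
        ≤ ∫ _θ, Real.exp (lam ^ 2 / (8 * n)) ∂(μ.map A) := by
          refine integral_mono hexpF_int.integral_prod_left (integrable_const _) ?_
          exact hinner
      _ = Real.exp (lam ^ 2 / (8 * n)) := by simp
  have hlogZ : Real.log (∫ p, Real.exp (F p) ∂ρ) ≤ lam ^ 2 / (8 * n) :=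
    (Real.log_le_iff_le_exp hZpos).2 hZle
  -- value of ∫ F dπ
  set E : ℝ := ∫ ω, ((∫ x, ℓ (A ω) x ∂P) - (∑ i, ℓ (A ω) (D ω i)) / n) ∂μ with hE_def
  have hEmeas : ∫ p, F p ∂π = lam * E := by
    rw [hπ_def, integral_map hAD.aemeasurable hF_meas.aestronglyMeasurable]
    rw [hF_def, hE_def]
    exact integral_const_mul lam _
  -- case split on klDiv finiteness
  by_cases hcase : π ≪ ρ ∧ Integrable (llr π ρ) π
  · obtain ⟨hac, hllr⟩ := hcase
    set KL : ℝ := ∫ p, llr π ρ p ∂π with hKL_def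
    have hKL0 : 0 ≤ KL := by
      have := dv_ineq π ρ hac hllr (fun _ => (0:ℝ)) measurable_const 0
        (Filter.Eventually.of_forall fun x => by simp)
      simpa using this
    have hDV : ∫ p, F p ∂π ≤ KL + Real.log (∫ p, Real.exp (F p) ∂ρ) :=
      dv_ineq π ρ hac hllr F hF_meas (lam * 2) hFbound
    have hreal : lam * E ≤ KL + lam ^ 2 / (8 * n) := by
      rw [← hEmeas]; linarith
    have hMIval : mutualInfo μ A D = ENNReal.ofReal KL := by
      rw [hMI, klDiv, if_pos ⟨hac, hllr⟩]
    constructor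
    · rw [hMIval]
      apply ENNReal.ofReal_le_ofReal
      linarith
    · have h2 : E ≤ KL / lam + lam / (8 * n) := by
        have h3 : E ≤ (KL + lam ^ 2 / (8 * n)) / lam :=
          (le_div_iff₀ hlam).2 (by rw [mul_comm]; linarith)
        have h4 : (KL + lam ^ 2 / (8 * n)) / lam = KL / lam + lam / (8 * n) := by
          field_simp
        linarith [h4 ▸ h3]
      rw [hMIval]
      calc ENNReal.ofReal E ≤ ENNReal.ofReal (KL / lam + lam / (8 * n)) :=
            ENNReal.ofReal_le_ofReal h2
        _ = ENNReal.ofReal (KL / lam) + ENNReal.ofReal (lam / (8 * n)) :=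
            ENNReal.ofReal_add (div_nonneg hKL0 hlam.le) (by positivity)
        _ = ENNReal.ofReal KL / ENNReal.ofReal lam + ENNReal.ofReal (lam / (8 * n)) := by
            rw [ENNReal.ofReal_div_of_pos hlam]
  · have hMItop : mutualInfo μ A D = ⊤ := by
      rw [hMI, klDiv, if_neg hcase]
    rw [hMItop]
    constructor
    · exact le_top
    · rw [ENNReal.top_div_of_ne_top ENNReal.ofReal_ne_top]
      exact le_top
end
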